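/- Let S be an integrable real-valued random variable on a probability space, let α ∈ (0,1), and let q be a real number with P(S ≤ q) = α. Then the function φ(z) = z + E[(S − z)^+]/(1 − α), defined for real z, satisfies φ(q) ≤ φ(z) for all real z; that is, q is a global minimizer of φ. -/

import Mathlib

open MeasureTheory

lemma stmt_8_aux {Ω : Type*} [MeasurableSpace Ω] (P : Measure Ω)
    [IsProbabilityMeasure P] (S : Ω → ℝ) (hS : Integrable S P) (hm : Measurable S)
    (α : ℝ) (hα : α ∈ Set.Ioo (0 : ℝ) 1)
    (q : ℝ) (hq : P {ω | S ω ≤ q} = ENNReal.ofReal α) (z : ℝ) :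
    q + (∫ ω, max (S ω - q) 0 ∂P) / (1 - α)
      ≤ z + (∫ ω, max (S ω - z) 0 ∂P) / (1 - α) := by
  obtain ⟨hα0, hα1⟩ := hα
  have hA : MeasurableSet {ω | q < S ω} := measurableSet_lt measurable_const hm
  have hcompl : {ω | q < S ω} = {ω | S ω ≤ q}ᶜ := by ext ω; simp [not_le]
  have hPA : (P {ω | q < S ω}).toReal = 1 - α := by
    rw [hcompl, measure_compl (measurableSet_le hm measurable_const) (measure_ne_top _ _),
      hq, measure_univ]
    rw [ENNReal.toReal_sub_of_le (by simpa using ENNReal.ofReal_le_one.2 hα1.le) (by simp)]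
    simp [ENNReal.toReal_ofReal hα0.le]
  have hint : ∀ c : ℝ, Integrable (fun ω => max (S ω - c) 0) P :=
    fun c => (hS.sub (integrable_const c)).pos_part
  have hind : Integrable ({ω | q < S ω}.indicator (fun _ => z - q)) P :=
    (integrable_const (z - q)).indicator hA
  have hle : (∫ ω, max (S ω - q) 0 ∂P)
      ≤ (∫ ω, max (S ω - z) 0 ∂P) + (z - q) * (1 - α) := by
    have hmono := integral_mono (μ := P) (hint q) ((hint z).add hind) (fun ω => by
      by_cases h : q < S ω
      · simp only [Pi.add_apply, Set.indicator_apply, Set.mem_setOf_eq, if_pos h]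
        have h1 : max (S ω - q) 0 = S ω - q := max_eq_left (by linarith)
        have h2 := le_max_left (S ω - z) 0
        rw [h1]; linarith
      · simp only [Pi.add_apply, Set.indicator_apply, Set.mem_setOf_eq, if_neg h]
        have h1 : max (S ω - q) 0 = 0 := max_eq_right (by simp only [Set.mem_setOf_eq, not_lt] at h; linarith)
        have h2 := le_max_right (S ω - z) 0
        rw [h1]; linarith)
    simp only [Pi.add_apply] at hmono
    rw [integral_add (hint z) hind, integral_indicator_const _ hA, measureReal_def, hPA] at hmono
    simpa [smul_eq_mul, mul_comm] using hmono
  have h1α : (0:ℝ) < 1 - α := by linarith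
  rw [← mul_le_mul_iff_of_pos_right h1α]
  field_simp
  nlinarith [hle]

/-- the Rockafellar–Uryasev objective `φ(z) = z + E[(S−z)⁺]/(1−α)` is
globally minimized at any `q` with `P(S ≤ q) = α`. -/
theorem stmt_8 {Ω : Type*} [MeasurableSpace Ω] (P : Measure Ω)
    [IsProbabilityMeasure P] (S : Ω → ℝ) (hS : Integrable S P)
    (α : ℝ) (hα : α ∈ Set.Ioo (0 : ℝ) 1)
    (q : ℝ) (hq : P {ω | S ω ≤ q} = ENNReal.ofReal α) :
    ∀ z : ℝ, q + (∫ ω, max (S ω - q) 0 ∂P) / (1 - α)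
      ≤ z + (∫ ω, max (S ω - z) 0 ∂P) / (1 - α) := by
  intro z
  obtain ⟨g, hgm, hge⟩ := hS.1
  have hgi : Integrable g P := hS.congr hge
  have hgq : P {ω | g ω ≤ q} = ENNReal.ofReal α := by
    rw [← hq]
    apply measure_congr
    filter_upwards [hge] with ω h
    change (g ω ≤ q) = (S ω ≤ q)
    rw [h]
  have hiq : (∫ ω, max (S ω - q) 0 ∂P) = ∫ ω, max (g ω - q) 0 ∂P :=
    integral_congr_ae (by filter_upwards [hge] with ω h; rw [h])
  have hiz : (∫ ω, max (S ω - z) 0 ∂P) = ∫ ω, max (g ω - z) 0 ∂P :=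
    integral_congr_ae (by filter_upwards [hge] with ω h; rw [h])
  rw [hiq, hiz]
  exact stmt_8_aux P g hgi hgm.measurable α hα q hgq z
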